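/- Let k ≥ 1 and P₁(X)=X, P₂,…,P_k ∈ ℚ[X] with degrees 1 = d₁ ≤ ⋯ ≤ d_k. For any λ ≥ 1/k and any ζ ∈ ℝ: if ζ ∈ H^1_{d_kλ + d_k − 1} (i.e. for all ε > 0, ‖qζ‖ ≤ q^{-(d_kλ+d_k−1)+ε} has infinitely many solutions q), then the point (P₁(ζ),…,P_k(ζ)) lies in H^k_λ, i.e. for all ε > 0, max_j ‖qP_j(ζ)‖ ≤ q^{-λ+ε} has infinitely many positive integer solutions q. -/

import Mathlib

/-- distance to the nearest integer -/
noncomputable def dnorm (x : ℝ) : ℝ := |x - round x|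

lemma dnorm_le_half (x : ℝ) : dnorm x ≤ 1/2 := abs_sub_round x



lemma dnorm_le_abs_sub_int (x : ℝ) (m : ℤ) : dnorm x ≤ |x - m| := by
  unfold dnorm
  rcases eq_or_ne m (round x) with rfl | hne
  · exact le_rfl
  · have h1 : |x - (round x : ℝ)| ≤ 1/2 := abs_sub_round x
    have h2 : (1:ℝ) ≤ |(m:ℝ) - (round x : ℝ)| := by
      have h0 : (1:ℤ) ≤ |m - round x| := Int.one_le_abs (sub_ne_zero.mpr hne)
      have h0' : ((1:ℤ):ℝ) ≤ ((|m - round x| : ℤ) : ℝ) := by exact_mod_cast h0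
      rwa [Int.cast_abs, Int.cast_one, Int.cast_sub] at h0'
    have h3 : |(m:ℝ) - round x| ≤ |(m:ℝ) - x| + |x - round x| := by
      have := abs_sub_le ((m:ℝ)) x ((round x : ℝ)); linarith [this]
    have h4 : |(m:ℝ) - x| = |x - m| := abs_sub_comm _ _
    linarith

lemma abs_pow_sub_pow (a b M : ℝ) (hM : 1 ≤ M) (ha : |a| ≤ M) (hb : |b| ≤ M)
    (n : ℕ) : |a^n - b^n| ≤ n * M^n * |a - b| := by
  induction n with
  | zero => simp
  | succ n ih =>
    have hMn : (0:ℝ) ≤ M^n := by positivity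
    have hMn1 : M^n ≤ M^(n+1) := by
      calc M^n = M^n * 1 := by ring
        _ ≤ M^n * M := by nlinarith
        _ = M^(n+1) := by ring
    have key : a^(n+1) - b^(n+1) = a*(a^n - b^n) + (a-b)*b^n := by ring
    calc |a^(n+1) - b^(n+1)| = |a*(a^n - b^n) + (a-b)*b^n| := by rw [key]
      _ ≤ |a*(a^n - b^n)| + |(a-b)*b^n| := abs_add_le _ _
      _ = |a| * |a^n - b^n| + |a-b| * |b|^n := by rw [abs_mul, abs_mul, abs_pow]
      _ ≤ M * (n * M^n * |a-b|) + |a-b| * M^n := by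
          have h1 : |a| * |a^n-b^n| ≤ M * (n * M^n * |a-b|) := by
            have h0 : (0:ℝ) ≤ |a| := abs_nonneg _
            nlinarith [abs_nonneg (a^n - b^n), abs_nonneg (a-b)]
          have h2 : |a-b| * |b|^n ≤ |a-b| * M^n := by
            have : |b|^n ≤ M^n := pow_le_pow_left₀ (abs_nonneg b) hb n
            nlinarith [abs_nonneg (a-b)]
          linarith
      _ = ((n : ℝ) * (M^n * M) + M^n) * |a-b| := by ring
      _ ≤ (((n : ℝ)+1) * (M^n * M)) * |a-b| := by
          have h5 := mul_le_mul_of_nonneg_right hMn1 (abs_nonneg (a-b))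
          rw [pow_succ] at h5
          nlinarith
      _ = ↑(n+1) * M^(n+1) * |a-b| := by rw [pow_succ]; push_cast; ring


lemma aeval_lipschitz (p : Polynomial ℚ) (d : ℕ) (hd : p.natDegree < d + 1)
    (z x M : ℝ) (hM : 1 ≤ M) (hz : |z| ≤ M) (hx : |x| ≤ M)
    (habs : ∀ a b : ℝ, |a| ≤ M → |b| ≤ M → ∀ n : ℕ, |a^n - b^n| ≤ n * M^n * |a - b|) :
    |Polynomial.aeval z p - Polynomial.aeval x p| ≤
      (∑ i ∈ Finset.range (d+1), |(p.coeff i : ℝ)| * (i * M^i)) * |z - x| := by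
  rw [Polynomial.aeval_eq_sum_range' hd z, Polynomial.aeval_eq_sum_range' hd x,
    ← Finset.sum_sub_distrib]
  calc |∑ i ∈ Finset.range (d+1), (p.coeff i • z ^ i - p.coeff i • x ^ i)|
      ≤ ∑ i ∈ Finset.range (d+1), |p.coeff i • z ^ i - p.coeff i • x ^ i| :=
        Finset.abs_sum_le_sum_abs _ _
    _ ≤ ∑ i ∈ Finset.range (d+1), |(p.coeff i : ℝ)| * (i * M^i) * |z - x| := by
        apply Finset.sum_le_sum
        intro i _
        have e1 : p.coeff i • z ^ i - p.coeff i • x ^ i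
            = (p.coeff i : ℝ) * (z ^ i - x ^ i) := by
          rw [Rat.smul_def, Rat.smul_def]; ring
        rw [e1, abs_mul]
        have := habs z x hz hx i
        have h0 : (0:ℝ) ≤ |(p.coeff i : ℝ)| := abs_nonneg _
        calc |(p.coeff i : ℝ)| * |z ^ i - x ^ i|
            ≤ |(p.coeff i : ℝ)| * (i * M^i * |z - x|) := by nlinarith
          _ = |(p.coeff i : ℝ)| * (i * M^i) * |z - x| := by ring
    _ = (∑ i ∈ Finset.range (d+1), |(p.coeff i : ℝ)| * (i * M^i)) * |z - x| := by
        rw [Finset.sum_mul]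

lemma key_int (p : Polynomial ℚ) (N : ℕ)
    (hN : ∀ i, ∃ zz : ℤ, (N:ℚ) * p.coeff i = zz)
    (d : ℕ) (hd : p.natDegree < d + 1) (pp : ℤ) (q : ℕ) (hq : 0 < q) :
    ∃ m : ℤ, (N:ℝ) * (q:ℝ)^d * Polynomial.aeval ((pp:ℝ)/(q:ℝ)) p = m := by
  choose zf hzf using hN
  refine ⟨∑ i ∈ Finset.range (d+1), zf i * pp^i * (q:ℤ)^(d-i), ?_⟩
  have hq0 : ((q:ℝ)) ≠ 0 := by positivity
  rw [Polynomial.aeval_eq_sum_range' hd, Finset.mul_sum]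
  push_cast
  apply Finset.sum_congr rfl
  intro i hi
  have hid : i ≤ d := by
    simp only [Finset.mem_range] at hi; omega
  have hzfi : ((zf i : ℤ) : ℝ) = (N:ℝ) * ((p.coeff i : ℚ) : ℝ) := by
    exact_mod_cast congrArg (fun r : ℚ => (r : ℝ)) (hzf i).symm
  rw [Rat.smul_def]
  push_cast
  have hpow : (q:ℝ)^d = (q:ℝ)^i * (q:ℝ)^(d-i) := by
    rw [← pow_add]; congr 1; omega
  rw [hzfi, hpow]
  field_simp
  have hqi : (q:ℝ)^i * ((q:ℝ)⁻¹)^i = 1 := by rw [← mul_pow, mul_inv_cancel₀ hq0, one_pow]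
  linear_combination ((N:ℝ) * ((p.coeff i : ℚ) : ℝ) * (pp:ℝ)^i) * hqi

theorem stmt_14 (k : ℕ) (hk : 1 ≤ k) (P : ℕ → Polynomial ℚ)
    (hP1 : P 0 = Polynomial.X)
    (hmono : ∀ i j, i ≤ j → j < k → (P i).natDegree ≤ (P j).natDegree)
    (hd1 : (P 0).natDegree = 1)
    (l : ℝ) (hl : 1 / k ≤ l) (ζ : ℝ)
    (h : ∀ ε > (0 : ℝ),
      {q : ℕ | 0 < q ∧ dnorm ((q : ℝ) * ζ) ≤
        (q : ℝ) ^ (-(((P (k - 1)).natDegree : ℝ) * l + (P (k - 1)).natDegree - 1) + ε)}.Infinite) :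
    ∀ ε > (0 : ℝ),
      {q : ℕ | 0 < q ∧ ∀ j < k,
        dnorm ((q : ℝ) * Polynomial.aeval ζ (P j)) ≤ (q : ℝ) ^ (-l + ε)}.Infinite := by
  intro ε hε
  have hk0 : (0:ℝ) < k := by exact_mod_cast hk
  have hl0 : (0:ℝ) < l := lt_of_lt_of_le (by positivity) hl
  by_cases hεl : l ≤ ε
  · -- trivial case : exponent nonnegative
    apply Set.Infinite.mono (s := {q : ℕ | 0 < q})
    · intro q hq
      refine ⟨hq, fun j hj => ?_⟩
      have hq1 : (1:ℝ) ≤ (q:ℝ) := by exact_mod_cast hq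
      calc dnorm ((q:ℝ) * Polynomial.aeval ζ (P j)) ≤ 1/2 := dnorm_le_half _
        _ ≤ 1 := by norm_num
        _ ≤ (q:ℝ) ^ (-l + ε) := Real.one_le_rpow hq1 (by linarith)
    · have : {q : ℕ | 0 < q} = Set.Ioi 0 := rfl
      rw [this]
      exact Set.Ioi_infinite 0
  · push_neg at hεl
    set d := (P (k - 1)).natDegree with hdd
    have hd1' : 1 ≤ d := by
      have := hmono 0 (k-1) (Nat.zero_le _) (by omega)
      rw [hd1] at this
      exact this
    set N : ℕ := ∏ j ∈ Finset.range k, ∏ i ∈ Finset.range ((P j).natDegree + 1),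
      ((P j).coeff i).den with hNdef
    have hNpos : 0 < N := by
      apply Finset.prod_pos; intro j _; apply Finset.prod_pos; intro i _
      exact ((P j).coeff i).den_pos
    have hNR1 : (1:ℝ) ≤ (N:ℝ) := by exact_mod_cast hNpos
    have hNR0 : (0:ℝ) < (N:ℝ) := by linarith
    have hNz : ∀ j, j < k → ∀ i, ∃ zz : ℤ, (N:ℚ) * (P j).coeff i = zz := by
      intro j hj i
      by_cases hi : i ≤ (P j).natDegree
      · have hdvd : ((P j).coeff i).den ∣ N := by
          have h1 : ((P j).coeff i).den ∣
              ∏ i' ∈ Finset.range ((P j).natDegree + 1), ((P j).coeff i').den :=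
            Finset.dvd_prod_of_mem _ (Finset.mem_range.mpr (by omega))
          have h2 : (∏ i' ∈ Finset.range ((P j).natDegree + 1), ((P j).coeff i').den) ∣ N :=
            Finset.dvd_prod_of_mem _ (Finset.mem_range.mpr hj)
          exact h1.trans h2
        obtain ⟨t, ht⟩ := hdvd
        refine ⟨(t : ℤ) * ((P j).coeff i).num, ?_⟩
        have hNq : (N:ℚ) = (((P j).coeff i).den : ℚ) * (t:ℚ) := by exact_mod_cast ht
        rw [hNq, mul_comm ((((P j).coeff i).den : ℚ)) ((t:ℚ)), mul_assoc,
          Rat.den_mul_eq_num]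
        push_cast
        ring
      · refine ⟨0, ?_⟩
        rw [Polynomial.coeff_eq_zero_of_natDegree_lt (by omega)]
        simp
    set M : ℝ := |ζ| + 1 with hMdef
    have hM1 : (1:ℝ) ≤ M := by rw [hMdef]; linarith [abs_nonneg ζ]
    set C : ℝ := 1 + ∑ j ∈ Finset.range k, ∑ i ∈ Finset.range (d+1),
      |((P j).coeff i : ℝ)| * (i * M^i) with hCdef
    have hM0 : (0:ℝ) < M := by linarith
    have hCj : ∀ j, j < k →
        (∑ i ∈ Finset.range (d+1), |((P j).coeff i : ℝ)| * (i * M^i)) ≤ C := by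
      intro j hj
      have hnn : ∀ j' ∈ Finset.range k,
          (0:ℝ) ≤ ∑ i ∈ Finset.range (d+1), |((P j').coeff i : ℝ)| * (i * M^i) := by
        intro j' _; positivity
      have := Finset.single_le_sum hnn (Finset.mem_range.mpr hj)
      rw [hCdef]; linarith
    have hC1 : (1:ℝ) ≤ C := by
      have h0 : (0:ℝ) ≤ ∑ j ∈ Finset.range k, ∑ i ∈ Finset.range (d+1),
          |((P j).coeff i : ℝ)| * (i * M^i) := by positivity
      rw [hCdef]; linarith
    have hC0 : (0:ℝ) < C := by linarith
    have htend := (tendsto_rpow_atTop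
      (show (0:ℝ) < (d:ℝ)*ε/2 by positivity)).comp tendsto_natCast_atTop_atTop (α := ℕ)
    obtain ⟨T, hT⟩ := Filter.eventually_atTop.mp
      (htend.eventually_ge_atTop ((N:ℝ)*C*(N:ℝ)^(l-ε)))
    apply Set.infinite_of_forall_exists_gt
    intro B
    obtain ⟨q, ⟨hq0, hqδ⟩, hqgt⟩ := (h ((d:ℝ)*ε/2) (by positivity)).exists_gt (max T B)
    have hqT : T ≤ q := le_of_lt (lt_of_le_of_lt (le_max_left _ _) hqgt)
    have hqB : B < q := lt_of_le_of_lt (le_max_right _ _) hqgt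
    have hr1 : (1:ℝ) ≤ (q:ℝ) := by exact_mod_cast hq0
    have hr0 : (0:ℝ) < (q:ℝ) := by linarith
    set e1 : ℝ := -((d:ℝ)*l + (d:ℝ) - 1) + (d:ℝ)*ε/2 with he1
    have hdr : (1:ℝ) ≤ (d:ℝ) := by exact_mod_cast hd1'
    have he1neg : e1 ≤ 0 := by rw [he1]; nlinarith
    have hδ : dnorm ((q:ℝ)*ζ) ≤ (q:ℝ)^e1 := hqδ
    have hδ0 : 0 ≤ dnorm ((q:ℝ)*ζ) := abs_nonneg _
    have hδ1 : dnorm ((q:ℝ)*ζ) ≤ 1 :=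
      le_trans hδ (Real.rpow_le_one_of_one_le_of_nonpos hr1 he1neg)
    set p : ℤ := round ((q:ℝ)*ζ) with hpdef
    set x : ℝ := (p:ℝ)/(q:ℝ) with hxdef
    have hζx : |ζ - x| = dnorm ((q:ℝ)*ζ) / (q:ℝ) := by
      rw [hxdef]
      have hrw : ζ - (p:ℝ)/(q:ℝ) = ((q:ℝ)*ζ - (p:ℝ))/(q:ℝ) := by field_simp
      rw [hrw, abs_div, abs_of_pos hr0]
      rfl
    have hζx1 : |ζ - x| ≤ 1 := by
      rw [hζx, div_le_one hr0]
      linarith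
    have hζM : |ζ| ≤ M := by rw [hMdef]; linarith
    have hxM : |x| ≤ M := by
      have h1 : |x| ≤ |ζ| + |ζ - x| := by
        have h2 := abs_sub ζ (ζ - x)
        have h3 : ζ - (ζ - x) = x := by ring
        rwa [h3] at h2
      rw [hMdef]; linarith
    refine ⟨N * q^d, ⟨?_, ?_⟩, ?_⟩
    · positivity
    · intro j hj
      have hnjd : (P j).natDegree < d + 1 := by
        have := hmono j (k-1) (by omega) (by omega)
        omega
      obtain ⟨m, hm⟩ := key_int (P j) N (hNz j hj) d hnjd p q hq0
      have hcast : ((N*q^d : ℕ) : ℝ) = (N:ℝ) * (q:ℝ)^d := by push_cast; ring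
      have hqd0 : (0:ℝ) < (N:ℝ) * (q:ℝ)^d := by positivity
      have step1 : dnorm (((N*q^d : ℕ) : ℝ) * Polynomial.aeval ζ (P j)) ≤
          (N:ℝ)*(q:ℝ)^d * (C * |ζ - x|) := by
        calc dnorm (((N*q^d : ℕ) : ℝ) * Polynomial.aeval ζ (P j))
            ≤ |((N*q^d : ℕ) : ℝ) * Polynomial.aeval ζ (P j) - (m:ℝ)| :=
              dnorm_le_abs_sub_int _ m
          _ = (N:ℝ)*(q:ℝ)^d *
              |Polynomial.aeval ζ (P j) - Polynomial.aeval x (P j)| := by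
              rw [hcast, ← hm, ← mul_sub, abs_mul, abs_of_pos hqd0]
          _ ≤ (N:ℝ)*(q:ℝ)^d * (C * |ζ - x|) := by
              have hlip := aeval_lipschitz (P j) d hnjd ζ x M hM1 hζM hxM
                (fun a b ha hb n => abs_pow_sub_pow a b M hM1 ha hb n)
              have hCj' := hCj j hj
              have hC2 : |Polynomial.aeval ζ (P j) - Polynomial.aeval x (P j)| ≤
                  C * |ζ - x| :=
                le_trans hlip (mul_le_mul_of_nonneg_right hCj' (abs_nonneg _))
              exact mul_le_mul_of_nonneg_left hC2 (le_of_lt hqd0)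
      have hrd : ((q:ℝ)^d) = (q:ℝ)^((d:ℝ)) := (Real.rpow_natCast _ d).symm
      have step2 : (N:ℝ)*(q:ℝ)^d * (C * |ζ - x|) ≤
          (N:ℝ)*C*(q:ℝ)^(e1 + (d:ℝ) - 1) := by
        rw [hζx]
        have hδ' : dnorm ((q:ℝ)*ζ)/(q:ℝ) ≤ (q:ℝ)^e1/(q:ℝ) := by gcongr
        have key : (q:ℝ)^((d:ℝ)) * ((q:ℝ)^e1 / (q:ℝ)) = (q:ℝ)^(e1 + (d:ℝ) - 1) := by
          rw [div_eq_mul_inv, ← Real.rpow_neg_one (q:ℝ), ← Real.rpow_add hr0,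
            ← Real.rpow_add hr0]
          congr 1; ring
        calc (N:ℝ)*(q:ℝ)^d * (C * (dnorm ((q:ℝ)*ζ)/(q:ℝ)))
            = (N:ℝ)*C*((q:ℝ)^((d:ℝ)) * (dnorm ((q:ℝ)*ζ)/(q:ℝ))) := by
              rw [← hrd]; ring
          _ ≤ (N:ℝ)*C*((q:ℝ)^((d:ℝ)) * ((q:ℝ)^e1/(q:ℝ))) := by
              apply mul_le_mul_of_nonneg_left
              · exact mul_le_mul_of_nonneg_left hδ' (by positivity)
              · positivity
          _ = (N:ℝ)*C*(q:ℝ)^(e1 + (d:ℝ) - 1) := by rw [key]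
      have step3 : (N:ℝ)*C*(q:ℝ)^(e1 + (d:ℝ) - 1) ≤ ((N*q^d : ℕ) : ℝ)^(-l+ε) := by
        have hexp : e1 + (d:ℝ) - 1 = -((d:ℝ)*l) + (d:ℝ)*ε/2 := by rw [he1]; ring
        have hTq : (N:ℝ)*C*(N:ℝ)^(l-ε) ≤ (q:ℝ)^((d:ℝ)*ε/2) := hT q hqT
        have hrhs : ((N*q^d : ℕ) : ℝ)^(-l+ε) =
            (N:ℝ)^(-l+ε) * (q:ℝ)^(-((d:ℝ)*l) + (d:ℝ)*ε) := by
          rw [hcast, Real.mul_rpow (le_of_lt hNR0) (by positivity)]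
          congr 1
          rw [← Real.rpow_natCast (q:ℝ) d, ← Real.rpow_mul (le_of_lt hr0)]
          congr 1; ring
        rw [hrhs, hexp]
        have hone : (N:ℝ)^(l-ε) * (N:ℝ)^(-l+ε) = 1 := by
          rw [← Real.rpow_add hNR0]
          norm_num
        have split1 : (q:ℝ)^(-((d:ℝ)*l) + (d:ℝ)*ε) =
            (q:ℝ)^((d:ℝ)*ε/2) * (q:ℝ)^(-((d:ℝ)*l) + (d:ℝ)*ε/2) := by
          rw [← Real.rpow_add hr0]; congr 1; ring
        calc (N:ℝ)*C*(q:ℝ)^(-((d:ℝ)*l) + (d:ℝ)*ε/2)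
            = ((N:ℝ)*C*(N:ℝ)^(l-ε)) *
              ((N:ℝ)^(-l+ε) * (q:ℝ)^(-((d:ℝ)*l) + (d:ℝ)*ε/2)) := by
              linear_combination
                (-((N:ℝ)*C*(q:ℝ)^(-((d:ℝ)*l) + (d:ℝ)*ε/2))) * hone
          _ ≤ ((q:ℝ)^((d:ℝ)*ε/2)) *
              ((N:ℝ)^(-l+ε) * (q:ℝ)^(-((d:ℝ)*l) + (d:ℝ)*ε/2)) :=
              mul_le_mul_of_nonneg_right hTq (by positivity)
          _ = (N:ℝ)^(-l+ε) * (q:ℝ)^(-((d:ℝ)*l) + (d:ℝ)*ε) := by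
              rw [split1]; ring
      exact le_trans step1 (le_trans step2 step3)
    · have h1 : q ≤ q^d := Nat.le_self_pow (by omega) q
      have h2 : q^d ≤ N * q^d := Nat.le_mul_of_pos_left _ hNpos
      omega
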